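/- Let F be a field of characteristic 0 or > k, f ∈ F[x_1,…,x_n] of degree k ≥ 2 whose degree-k part f_0 satisfies ∂f_0/∂x_1(x_1,…,x_n) ≠ 0 and f_0(x_1,…,x_n) = 0. Let d ≥ m ≥ 1, m' < m, let h_2 be a monic polynomial of degree m', and let g_j(T) = x_j T^d + (lower order terms) be polynomials of degree d with leading coefficients x_j. Then for every λ ∈ F, the polynomial F_λ(T) = f(g_1(T) + λ T^{d−m} h_2(T), g_2(T), …, g_n(T)) − f(g_1(T),…,g_n(T)) is divisible by h_2(T), and for λ ≠ 0 it has degree exactly d − m + m' + (k−1)d, with leading coefficient λ · (∂f_0/∂x_1)(x_1,…,x_n). -/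

import Mathlib

open MvPolynomial Polynomial Finset

namespace Stmt16Aux

variable {F : Type} [Field F] {n : ℕ}

lemma degree_eq_sum' (s : Fin n →₀ ℕ) : s.degree = s.sum fun _ e => e := by
  simp [Finsupp.degree, Finsupp.sum]; rfl

lemma degree_eq_sum_univ (s : Fin n →₀ ℕ) : s.degree = ∑ j, s j := by
  rw [degree_eq_sum']
  exact Finsupp.sum_fintype _ _ fun _ => rfl

lemma tdeg_le {p : MvPolynomial (Fin n) F} {D : ℕ}
    (h : ∀ s ∈ p.support, s.degree ≤ D) : p.totalDegree ≤ D := by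
  apply Finset.sup_le
  intro s hs
  rw [← degree_eq_sum' s]
  exact h s hs

lemma degree_sub_single {s : Fin n →₀ ℕ} {i : Fin n} (h : 1 ≤ s i) :
    (s - Finsupp.single i (1 : ℕ)).degree = s.degree - 1 := by
  have key : ∀ t : Fin n →₀ ℕ, ∑ j, t j = t i + ∑ j ∈ univ \ {i}, t j := fun t =>
    Finset.sum_eq_add_sum_sdiff_singleton_of_mem (mem_univ i) (fun j => t j)
  rw [degree_eq_sum_univ, degree_eq_sum_univ, key (s - Finsupp.single i (1 : ℕ)), key s]
  have h1 : (s - Finsupp.single i (1 : ℕ)) i = s i - 1 := by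
    simp [Finsupp.tsub_apply]
  have h2 : ∀ j ∈ univ \ {i}, (s - Finsupp.single i (1 : ℕ)) j = s j := by
    intro j hj
    simp only [mem_sdiff, mem_singleton] at hj
    simp [Finsupp.tsub_apply, Finsupp.single_apply, Ne.symm hj.2]
  have h2' : ∑ j ∈ univ \ {i}, (s - Finsupp.single i (1 : ℕ)) j = ∑ j ∈ univ \ {i}, s j :=
    Finset.sum_congr rfl h2
  rw [h1, h2']
  omega

lemma totalDegree_pderiv_le (i : Fin n) (p : MvPolynomial (Fin n) F) :
    (pderiv i p).totalDegree ≤ p.totalDegree - 1 := by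
  conv_lhs => rw [p.as_sum]
  rw [map_sum]
  refine (totalDegree_finset_sum _ _).trans (Finset.sup_le fun s hs => ?_)
  rw [pderiv_monomial]
  by_cases h : s i = 0
  · simp [h]
  · refine (totalDegree_monomial_le _ _).trans ?_
    have hd := degree_sub_single (i := i) (s := s) (by omega)
    have hle := le_totalDegree hs
    have hid : ((s - Finsupp.single i (1 : ℕ)).sum fun _ => id)
        = (s - Finsupp.single i (1 : ℕ)).degree := by exact (degree_eq_sum' _).symm
    rw [hid]
    have hdeg : s.degree ≤ p.totalDegree := by rw [degree_eq_sum']; exact hle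
    omega

lemma isHomog_pderiv {k : ℕ} (i : Fin n) (p : MvPolynomial (Fin n) F) :
    (pderiv i (homogeneousComponent k p)).IsHomogeneous (k - 1) := by
  rw [homogeneousComponent_apply, map_sum]
  apply IsHomogeneous.sum
  intro s hs
  simp only [Finset.mem_filter] at hs
  rw [pderiv_monomial]
  by_cases h : s i = 0
  · simp only [h, Nat.cast_zero, mul_zero, map_zero]
    exact isHomogeneous_zero _ _ _
  · exact isHomogeneous_monomial _ (by rw [degree_sub_single (by omega), hs.2])

lemma tdeg_sub_homog (f : MvPolynomial (Fin n) F) (k : ℕ) (h : f.totalDegree ≤ k) :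
    (f - homogeneousComponent k f).totalDegree ≤ k - 1 := by
  apply tdeg_le
  intro s hs
  have h1 : coeff s (f - homogeneousComponent k f) ≠ 0 := mem_support_iff.mp hs
  rw [coeff_sub, coeff_homogeneousComponent] at h1
  by_cases hsd : s.degree = k
  · simp [hsd] at h1
  · have hc : coeff s f ≠ 0 := by simpa [hsd] using h1
    have := le_totalDegree (mem_support_iff.mpr hc)
    rw [← degree_eq_sum'] at this
    omega

lemma aux1 {d D : ℕ} (hd : 1 ≤ d) (g : Fin n → Polynomial F) (x : Fin n → F)
    (hg : ∀ j, (g j).natDegree = d) (hl : ∀ j, (g j).coeff d = x j)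
    (P : MvPolynomial (Fin n) F) (hP : P.totalDegree ≤ D) :
    (aeval g P).natDegree ≤ D * d ∧
      (aeval g P).coeff (D * d) = MvPolynomial.eval x (homogeneousComponent D P) := by
  have hgne : ∀ j, g j ≠ 0 := by
    intro j hj
    have := hg j
    rw [hj, natDegree_zero] at this
    omega
  have hlead : ∀ j, (g j).leadingCoeff = x j := fun j => by
    rw [leadingCoeff, hg j, hl j]
  have hrepr : aeval g P = ∑ s ∈ P.support, Polynomial.C (coeff s P) * ∏ j, g j ^ s j := by
    rw [MvPolynomial.aeval_def, eval₂_eq', Polynomial.algebraMap_eq]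
  have hdegs : ∀ s ∈ P.support, s.degree ≤ D := fun s hs => by
    have := le_totalDegree hs
    rw [← degree_eq_sum'] at this
    omega
  have hprodd : ∀ s : Fin n →₀ ℕ, (∏ j, g j ^ s j).natDegree = s.degree * d := by
    intro s
    rw [natDegree_prod _ _ fun j _ => pow_ne_zero _ (hgne j)]
    simp only [natDegree_pow, hg]
    rw [degree_eq_sum_univ, Finset.sum_mul]
  constructor
  · rw [hrepr]
    apply natDegree_sum_le_of_forall_le
    intro s hs
    refine natDegree_mul_le.trans ?_
    rw [natDegree_C, hprodd s, zero_add]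
    exact Nat.mul_le_mul (hdegs s hs) le_rfl
  · rw [hrepr, finset_sum_coeff, homogeneousComponent_apply, map_sum, Finset.sum_filter]
    apply Finset.sum_congr rfl
    intro s hs
    rw [Polynomial.coeff_C_mul]
    by_cases hsD : s.degree = D
    · rw [if_pos hsD, MvPolynomial.eval_monomial, ← hsD, ← hprodd s, coeff_natDegree,
        leadingCoeff_prod]
      simp [leadingCoeff_pow, hlead, Finsupp.prod_pow]
    · rw [if_neg hsD]
      have hlt : s.degree * d < D * d :=
        mul_lt_mul_of_pos_right (lt_of_le_of_ne (hdegs s hs) hsD) (by omega)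
      rw [coeff_eq_zero_of_natDegree_lt (by rw [hprodd s]; exact hlt), mul_zero]

lemma binom_rem (p q : Polynomial F) (N : ℕ) :
    (p + q) ^ N - p ^ N - (N : Polynomial F) * q * p ^ (N - 1)
      = ∑ i ∈ Finset.Ico 2 (N + 1), p ^ (N - i) * q ^ i * ((N.choose i : ℕ) : Polynomial F) := by
  rcases N with _ | N
  · simp
  · rw [add_comm p q, add_pow, Finset.range_eq_Ico,
      Finset.sum_eq_sum_Ico_succ_bot (by omega), Finset.sum_eq_sum_Ico_succ_bot (by omega)]
    have hcongr : ∀ i ∈ Finset.Ico 2 (N + 1 + 1),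
        q ^ i * p ^ (N + 1 - i) * ((N + 1).choose i : Polynomial F)
          = p ^ (N + 1 - i) * q ^ i * (((N + 1).choose i : ℕ) : Polynomial F) := by
      intro i _
      ring
    rw [Finset.sum_congr rfl hcongr]
    have hch : ((N + 1).choose 1 : Polynomial F) = ((N : Polynomial F) + 1) := by
      rw [Nat.choose_one_right]; push_cast; ring
    simp only [pow_zero, pow_one, Nat.choose_zero_right, Nat.cast_one,
      one_mul, mul_one, Nat.sub_zero, Nat.add_sub_cancel, hch]
    push_cast
    ring

lemma aux_mono (i0 : Fin n) (g : Fin n → Polynomial F) (c : Polynomial F)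
    (s : Fin n →₀ ℕ) (a : F) :
    aeval (Function.update g i0 (g i0 + c)) (monomial s a)
        - aeval g (monomial s a) - c * aeval g (pderiv i0 (monomial s a))
      = Polynomial.C a * (∏ j ∈ univ \ {i0}, g j ^ s j) *
          ∑ i ∈ Finset.Ico 2 (s i0 + 1),
            g i0 ^ (s i0 - i) * c ^ i * (((s i0).choose i : ℕ) : Polynomial F) := by
  have hsplit : ∀ v : Polynomial F,
      (∏ j, (Function.update g i0 v) j ^ s j) = v ^ s i0 * ∏ j ∈ univ \ {i0}, g j ^ s j := by
    intro v
    have hfe : (fun j => (Function.update g i0 v) j ^ s j)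
        = Function.update (fun j => g j ^ s j) i0 (v ^ s i0) := by
      funext j
      by_cases hj : j = i0
      · subst hj; simp
      · simp [Function.update_of_ne hj]
    calc (∏ j, (Function.update g i0 v) j ^ s j)
        = ∏ j, Function.update (fun j => g j ^ s j) i0 (v ^ s i0) j := by rw [hfe]
      _ = v ^ s i0 * ∏ j ∈ univ \ {i0}, g j ^ s j :=
          Finset.prod_update_of_mem (mem_univ i0) _ _
  have hg2 : (∏ j, g j ^ s j) = g i0 ^ s i0 * ∏ j ∈ univ \ {i0}, g j ^ s j :=
    Finset.prod_eq_mul_prod_sdiff_singleton_of_mem (mem_univ i0) _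
  have h3 : (∏ j, g j ^ ((s - Finsupp.single i0 (1 : ℕ) : Fin n →₀ ℕ) j))
      = g i0 ^ (s i0 - 1) * ∏ j ∈ univ \ {i0}, g j ^ s j := by
    rw [Finset.prod_eq_mul_prod_sdiff_singleton_of_mem (mem_univ i0)
      (fun j => g j ^ ((s - Finsupp.single i0 (1 : ℕ)) j))]
    congr 1
    · congr 1
      simp [Finsupp.tsub_apply]
    · apply Finset.prod_congr rfl
      intro j hj
      simp only [mem_sdiff, mem_singleton] at hj
      congr 1
      simp [Finsupp.tsub_apply, Finsupp.single_apply, Ne.symm hj.2]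
  rw [pderiv_monomial, MvPolynomial.aeval_monomial, MvPolynomial.aeval_monomial,
    MvPolynomial.aeval_monomial,
    Finsupp.prod_pow, Finsupp.prod_pow, Finsupp.prod_pow, hsplit, hg2, h3, ← binom_rem]
  simp only [Polynomial.algebraMap_eq, map_mul, map_natCast]
  ring

lemma aux2 {d D e : ℕ} (hed : e ≤ d) (i0 : Fin n)
    (g : Fin n → Polynomial F) (c : Polynomial F)
    (hg : ∀ j, (g j).natDegree ≤ d) (hc : c.natDegree ≤ e)
    (P : MvPolynomial (Fin n) F) (hP : P.totalDegree ≤ D) :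
    ((aeval (Function.update g i0 (g i0 + c)) P) - aeval g P
        - c * aeval g (pderiv i0 P)).natDegree ≤ 2 * e + (D - 2) * d := by
  conv_lhs => rw [P.as_sum]
  rw [map_sum, map_sum, map_sum, map_sum, Finset.mul_sum,
      ← Finset.sum_sub_distrib, ← Finset.sum_sub_distrib]
  apply natDegree_sum_le_of_forall_le
  intro s hs
  rw [aux_mono]
  by_cases hs0 : s i0 ≤ 1
  · rw [Finset.Ico_eq_empty (by omega), Finset.sum_empty, mul_zero]
    simp
  · have hsd : s.degree ≤ D := by
      have := le_totalDegree hs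
      rw [← degree_eq_sum'] at this
      omega
    have hdegsum : s i0 + ∑ j ∈ univ \ {i0}, s j ≤ D := by
      rw [degree_eq_sum_univ, Finset.sum_eq_add_sum_sdiff_singleton_of_mem (mem_univ i0) (fun j => s j)]
        at hsd
      exact hsd
    have hQ : (∏ j ∈ univ \ {i0}, g j ^ s j).natDegree ≤ (∑ j ∈ univ \ {i0}, s j) * d := by
      refine (natDegree_prod_le _ _).trans ?_
      rw [Finset.sum_mul]
      refine Finset.sum_le_sum fun j _ => ?_
      rw [natDegree_pow]
      exact Nat.mul_le_mul_left _ (hg j)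
    have hS : (∑ i ∈ Finset.Ico 2 (s i0 + 1),
        g i0 ^ (s i0 - i) * c ^ i * (((s i0).choose i : ℕ) : Polynomial F)).natDegree
          ≤ 2 * e + (s i0 - 2) * d := by
      apply natDegree_sum_le_of_forall_le
      intro i hi
      simp only [Finset.mem_Ico] at hi
      have hb1 : (g i0 ^ (s i0 - i)).natDegree ≤ (s i0 - i) * d := by
        rw [natDegree_pow]
        exact Nat.mul_le_mul le_rfl (hg i0)
      have hb2 : (c ^ i).natDegree ≤ i * e :=
        natDegree_pow_le.trans (Nat.mul_le_mul le_rfl hc)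
      have hb3 : ((((s i0).choose i : ℕ)) : Polynomial F).natDegree = 0 := natDegree_natCast _
      have htot := natDegree_mul_le.trans
        (add_le_add (natDegree_mul_le.trans (add_le_add hb1 hb2)) hb3.le)
      refine htot.trans ?_
      obtain ⟨b, hb⟩ : ∃ b, i = b + 2 := ⟨i - 2, by omega⟩
      obtain ⟨a', ha'⟩ : ∃ a', s i0 = a' + b + 2 := ⟨s i0 - (b + 2), by omega⟩
      subst hb
      rw [ha']
      have h1 : a' + b + 2 - (b + 2) = a' := by omega
      have h2 : a' + b + 2 - 2 = a' + b := by omega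
      rw [h1, h2]
      have hbe : b * e ≤ b * d := Nat.mul_le_mul le_rfl hed
      calc a' * d + (b + 2) * e + 0
          = a' * d + b * e + 2 * e := by ring
        _ ≤ a' * d + b * d + 2 * e := by omega
        _ = 2 * e + (a' + b) * d := by ring
    refine natDegree_mul_le.trans ?_
    refine (add_le_add (natDegree_mul_le.trans (add_le_add (Nat.le_of_eq (natDegree_C _)) hQ))
      hS).trans ?_
    have h5 : (∑ j ∈ univ \ {i0}, s j) + (s i0 - 2) ≤ D - 2 := by omega
    calc 0 + (∑ j ∈ univ \ {i0}, s j) * d + (2 * e + (s i0 - 2) * d)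
        = 2 * e + ((∑ j ∈ univ \ {i0}, s j) + (s i0 - 2)) * d := by ring
      _ ≤ 2 * e + (D - 2) * d := by
          have := Nat.mul_le_mul h5 (le_refl d)
          omega

lemma aux_dvd (i0 : Fin n) (g : Fin n → Polynomial F) (c h2 : Polynomial F) (hc : h2 ∣ c)
    (f : MvPolynomial (Fin n) F) :
    h2 ∣ aeval (Function.update g i0 (g i0 + c)) f - aeval g f := by
  induction f using MvPolynomial.induction_on with
  | C a => simp
  | add p q hp hq =>
    have : aeval (Function.update g i0 (g i0 + c)) (p + q) - aeval g (p + q)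
        = (aeval (Function.update g i0 (g i0 + c)) p - aeval g p)
          + (aeval (Function.update g i0 (g i0 + c)) q - aeval g q) := by
      simp only [map_add]; ring
    rw [this]
    exact dvd_add hp hq
  | mul_X p i hp =>
    have hui : h2 ∣ Function.update g i0 (g i0 + c) i - g i := by
      by_cases hi : i = i0
      · subst hi; simp [hc]
      · simp [Function.update_of_ne hi]
    have : aeval (Function.update g i0 (g i0 + c)) (p * X i) - aeval g (p * X i)
        = aeval (Function.update g i0 (g i0 + c)) p * (Function.update g i0 (g i0 + c) i - g i)
          + (aeval (Function.update g i0 (g i0 + c)) p - aeval g p) * g i := by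
      simp only [map_mul, MvPolynomial.aeval_X]; ring
    rw [this]
    exact dvd_add (hui.mul_left _) (hp.mul_right _)

end Stmt16Aux

open Stmt16Aux in
theorem stmt_16 (F : Type) [Field F] (n k d m m' : ℕ) (hn : 1 ≤ n)
    (hk : 2 ≤ k) (hchar : ringChar F = 0 ∨ k < ringChar F)
    (hm : 1 ≤ m) (hdm : m ≤ d) (hm' : m' < m)
    (f : MvPolynomial (Fin n) F) (hdeg : f.totalDegree = k)
    (x : Fin n → F)
    (h0 : MvPolynomial.eval x (MvPolynomial.homogeneousComponent k f) = 0)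
    (h1 : MvPolynomial.eval x
        (MvPolynomial.pderiv (⟨0, hn⟩ : Fin n) (MvPolynomial.homogeneousComponent k f)) ≠ 0)
    (h2 : Polynomial F) (hmon : h2.Monic) (hd2 : h2.natDegree = m')
    (g : Fin n → Polynomial F)
    (hgdeg : ∀ j, (g j).natDegree = d) (hglead : ∀ j, (g j).coeff d = x j)
    (lam : F) :
    h2 ∣ (MvPolynomial.aeval
            (Function.update g (⟨0, hn⟩ : Fin n)
              (g (⟨0, hn⟩ : Fin n) + Polynomial.C lam * Polynomial.X ^ (d - m) * h2)) f
          - MvPolynomial.aeval g f) ∧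
    (lam ≠ 0 →
      (MvPolynomial.aeval
            (Function.update g (⟨0, hn⟩ : Fin n)
              (g (⟨0, hn⟩ : Fin n) + Polynomial.C lam * Polynomial.X ^ (d - m) * h2)) f
          - MvPolynomial.aeval g f).natDegree = d - m + m' + (k - 1) * d ∧
      (MvPolynomial.aeval
            (Function.update g (⟨0, hn⟩ : Fin n)
              (g (⟨0, hn⟩ : Fin n) + Polynomial.C lam * Polynomial.X ^ (d - m) * h2)) f
          - MvPolynomial.aeval g f).leadingCoeff
        = lam * MvPolynomial.eval x
            (MvPolynomial.pderiv (⟨0, hn⟩ : Fin n) (MvPolynomial.homogeneousComponent k f))) := by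
  classical
  set i0 : Fin n := ⟨0, hn⟩ with hi0
  set c : Polynomial F := Polynomial.C lam * Polynomial.X ^ (d - m) * h2 with hcdef
  have hdvdc : h2 ∣ c := Dvd.intro_left _ rfl
  refine ⟨Stmt16Aux.aux_dvd i0 g c h2 hdvdc f, fun hlam => ?_⟩
  have hd1 : 1 ≤ d := le_trans hm hdm
  have h2ne : h2 ≠ 0 := hmon.ne_zero
  have hCne : Polynomial.C lam ≠ 0 := Polynomial.C_ne_zero.mpr hlam
  have hXne : (Polynomial.X : Polynomial F) ^ (d - m) ≠ 0 := pow_ne_zero _ Polynomial.X_ne_zero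
  have hcX : Polynomial.C lam * Polynomial.X ^ (d - m) ≠ 0 := mul_ne_zero hCne hXne
  have hcne : c ≠ 0 := mul_ne_zero hcX h2ne
  set e := d - m + m' with hedef
  have hce : c.natDegree = e := by
    rw [hcdef, Polynomial.natDegree_mul hcX h2ne, Polynomial.natDegree_mul hCne hXne,
      Polynomial.natDegree_C, Polynomial.natDegree_X_pow, hd2]
    omega
  have hclead : c.leadingCoeff = lam := by
    rw [hcdef, Polynomial.leadingCoeff_mul, Polynomial.leadingCoeff_mul,
      Polynomial.leadingCoeff_C, Polynomial.leadingCoeff_X_pow, hmon.leadingCoeff]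
    ring
  set P1 := MvPolynomial.pderiv i0 f with hP1
  have hP1deg : P1.totalDegree ≤ k - 1 := by
    have := totalDegree_pderiv_le i0 f
    rw [hdeg] at this
    exact this
  obtain ⟨hAdeg, hAco⟩ := aux1 hd1 g x hgdeg hglead P1 hP1deg
  have hcomm : MvPolynomial.homogeneousComponent (k-1) P1
      = MvPolynomial.pderiv i0 (MvPolynomial.homogeneousComponent k f) := by
    have hfsplit : P1 = MvPolynomial.pderiv i0 (MvPolynomial.homogeneousComponent k f)
        + MvPolynomial.pderiv i0 (f - MvPolynomial.homogeneousComponent k f) := by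
      rw [hP1, ← map_add]
      congr 1
      ring
    rw [hfsplit, map_add]
    have hz : MvPolynomial.homogeneousComponent (k-1)
        (MvPolynomial.pderiv i0 (f - MvPolynomial.homogeneousComponent k f)) = 0 := by
      apply MvPolynomial.homogeneousComponent_eq_zero
      have ht := totalDegree_pderiv_le i0 (f - MvPolynomial.homogeneousComponent k f)
      have ht2 := tdeg_sub_homog f k (le_of_eq hdeg)
      omega
    have hh : MvPolynomial.homogeneousComponent (k-1)
          (MvPolynomial.pderiv i0 (MvPolynomial.homogeneousComponent k f))
        = MvPolynomial.pderiv i0 (MvPolynomial.homogeneousComponent k f) := by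
      rw [MvPolynomial.homogeneousComponent_of_mem
        ((MvPolynomial.mem_homogeneousSubmodule _ _).mpr (isHomog_pderiv i0 f)), if_pos rfl]
    rw [hz, hh, add_zero]
  rw [hcomm] at hAco
  set A := MvPolynomial.aeval g P1 with hA
  have hAdeg' : A.natDegree = (k-1)*d :=
    le_antisymm hAdeg (le_natDegree_of_ne_zero (by rw [hAco]; exact h1))
  have hAlead : A.leadingCoeff
      = MvPolynomial.eval x (MvPolynomial.pderiv i0 (MvPolynomial.homogeneousComponent k f)) := by
    rw [← Polynomial.coeff_natDegree, hAdeg', hAco]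
  have hAne : A ≠ 0 := fun h => h1 (by rw [← hAco, h, Polynomial.coeff_zero])
  set u := Function.update g i0 (g i0 + c) with hu
  set R := MvPolynomial.aeval u f - MvPolynomial.aeval g f - c * A with hR
  have hRdeg : R.natDegree ≤ 2*e + (k-2)*d :=
    aux2 (by omega) i0 g c (fun j => (hgdeg j).le) hce.le f hdeg.le
  have hFeq : MvPolynomial.aeval u f - MvPolynomial.aeval g f = c * A + R := by
    rw [hR]; ring
  have hcAdeg : (c * A).natDegree = e + (k-1)*d := by
    rw [Polynomial.natDegree_mul hcne hAne, hce, hAdeg']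
  have hlt : R.natDegree < (c*A).natDegree := by
    rw [hcAdeg]
    have hkd : (k-1)*d = (k-2)*d + d := by
      have hkk : k - 1 = (k-2) + 1 := by omega
      rw [hkk, add_mul, one_mul]
    have hedlt : e < d := by omega
    omega
  have hN : (MvPolynomial.aeval u f - MvPolynomial.aeval g f).natDegree = e + (k-1)*d := by
    rw [hFeq, Polynomial.natDegree_add_eq_left_of_natDegree_lt hlt, hcAdeg]
  refine ⟨hN, ?_⟩
  have hdlt : R.degree < (c*A).degree := Polynomial.degree_lt_degree hlt
  have hlc : (MvPolynomial.aeval u f - MvPolynomial.aeval g f).leadingCoeff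
      = (c*A).leadingCoeff := by
    rw [hFeq, add_comm]
    exact Polynomial.leadingCoeff_add_of_degree_lt hdlt
  rw [hlc, Polynomial.leadingCoeff_mul, hclead, hAlead]
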